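/- Symmetric invariant existence: For all n ≥ 2 and 2 ≤ u ≤ n, and every k with 1 ≤ k ≤ min(u − 1, n/2) (floor division), there exists a distinct DNF tautology on n variables, invariant under the full symmetric group acting on variable indices, all of whose cubes have length between k and u. (One can take all all-positive cubes of length k together with all all-negative cubes of length k+1.) -/

import Mathlib

abbrev Cube (n : ℕ) := Finset (Fin n) × (Fin n → Bool)

def Sat {n : ℕ} (a : Fin n → Bool) (c : Cube n) : Prop :=
  ∀ i ∈ c.1, a i = c.2 i

def DistinctDNF {n : ℕ} (D : Finset (Cube n)) : Prop :=
  ∀ c ∈ D, ∀ c' ∈ D, c.1 = c'.1 → c = c'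

def Tauto {n : ℕ} (D : Finset (Cube n)) : Prop :=
  ∀ a : Fin n → Bool, ∃ c ∈ D, Sat a c

def MemUpTo {n : ℕ} (D : Finset (Cube n)) (c : Cube n) : Prop :=
  ∃ c' ∈ D, c'.1 = c.1 ∧ ∀ i ∈ c.1, c'.2 i = c.2 i

def permCube {n : ℕ} (σ : Equiv.Perm (Fin n)) (c : Cube n) : Cube n :=
  (c.1.image σ, c.2 ∘ σ.symm)

theorem stmt14 (n u k : ℕ) (hn : 2 ≤ n) (hu2 : 2 ≤ u) (hun : u ≤ n)
    (hk1 : 1 ≤ k) (hk : k ≤ min (u - 1) (n / 2)) :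
    ∃ D : Finset (Cube n), DistinctDNF D ∧ Tauto D ∧
      (∀ σ : Equiv.Perm (Fin n), ∀ c ∈ D, MemUpTo D (permCube σ c)) ∧
      ∀ c ∈ D, k ≤ c.1.card ∧ c.1.card ≤ u := by
  have hku : k + 1 ≤ u := by
    have := le_trans hk (min_le_left (u-1) (n/2)); omega
  have hkn : 2 * k ≤ n := by
    have := le_trans hk (min_le_right (u-1) (n/2)); omega
  set D : Finset (Cube n) :=
    ((Finset.univ : Finset (Fin n)).powersetCard k).image (fun S => (S, fun _ => true)) ∪
    ((Finset.univ : Finset (Fin n)).powersetCard (k+1)).image (fun S => (S, fun _ => false))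
    with hD
  have hmem : ∀ c : Cube n, c ∈ D ↔
      (c.1.card = k ∧ c.2 = fun _ => true) ∨ (c.1.card = k + 1 ∧ c.2 = fun _ => false) := by
    intro c
    simp only [hD, Finset.mem_union, Finset.mem_image, Finset.mem_powersetCard,
      Finset.subset_univ, true_and]
    constructor
    · rintro (⟨S, hS, rfl⟩ | ⟨S, hS, rfl⟩)
      · exact Or.inl ⟨hS, rfl⟩
      · exact Or.inr ⟨hS, rfl⟩
    · rintro (⟨h1, h2⟩ | ⟨h1, h2⟩)
      · exact Or.inl ⟨c.1, h1, by rw [← h2]⟩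
      · exact Or.inr ⟨c.1, h1, by rw [← h2]⟩
  refine ⟨D, ?_, ?_, ?_, ?_⟩
  · -- DistinctDNF
    intro c hc c' hc' hcc
    rw [hmem] at hc hc'
    have hcard : c.1.card = c'.1.card := by rw [hcc]
    have : c.2 = c'.2 := by
      rcases hc with ⟨h1, h2⟩ | ⟨h1, h2⟩ <;> rcases hc' with ⟨h1', h2'⟩ | ⟨h1', h2'⟩ <;>
        first | (exfalso; omega) | rw [h2, h2']
    exact Prod.ext hcc this
  · -- Tauto
    intro a
    classical
    by_cases h : k ≤ (Finset.univ.filter (fun i => a i = true)).card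
    · obtain ⟨S, hS, hScard⟩ := Finset.exists_subset_card_eq h
      refine ⟨(S, fun _ => true), ?_, ?_⟩
      · rw [hmem]; exact Or.inl ⟨hScard, rfl⟩
      · intro i hi
        have := hS hi
        simp only [Finset.mem_filter] at this
        exact this.2
    · push_neg at h
      have hfc : k + 1 ≤ (Finset.univ.filter (fun i => a i = false)).card := by
        have hsplit : (Finset.univ.filter (fun i => a i = true)).card
            + (Finset.univ.filter (fun i => a i = false)).card = n := by
          have h2 := Finset.card_filter_add_card_filter_not
            (s := (Finset.univ : Finset (Fin n))) (p := fun i => a i = true)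
          have h3 : (Finset.univ.filter (fun i => ¬ a i = true))
              = Finset.univ.filter (fun i => a i = false) := by
            apply Finset.filter_congr; intro i _; simp [Bool.not_eq_true]
          rw [h3, Finset.card_fin] at h2
          exact h2
        omega
      obtain ⟨S, hS, hScard⟩ := Finset.exists_subset_card_eq hfc
      refine ⟨(S, fun _ => false), ?_, ?_⟩
      · rw [hmem]; exact Or.inr ⟨hScard, rfl⟩
      · intro i hi
        have := hS hi
        simp only [Finset.mem_filter] at this
        exact this.2
  · -- invariance
    intro σ c hc
    refine ⟨permCube σ c, ?_, rfl, fun i _ => rfl⟩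
    rw [hmem] at hc ⊢
    have hcard : (permCube σ c).1.card = c.1.card :=
      Finset.card_image_of_injective _ σ.injective
    rcases hc with ⟨h1, h2⟩ | ⟨h1, h2⟩
    · exact Or.inl ⟨by rw [hcard, h1], by funext i; simp [permCube, h2]⟩
    · exact Or.inr ⟨by rw [hcard, h1], by funext i; simp [permCube, h2]⟩
  · -- cardinalities
    intro c hc
    rw [hmem] at hc
    rcases hc with ⟨h1, _⟩ | ⟨h1, _⟩ <;> omega
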